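/- arXiv:2107.06585 — 2 statements merged into one kernel-verified Lean document; each statement's English description precedes it below -/
import Mathlib

section
/- The 9×9 matrix C with 3×3 blocks C = [[1, A, B],[A†, 1, 0],[B†, 0, 1]], where A = |3⟩⟨1| and B = |1⟩⟨1| (in the standard basis of C³), is positive semidefinite with unit diagonal, but its partial transpose has the negative eigenvalue 1 − √2; hence C/9 is an entangled PPT-violating state on C³⊗C³. -/
open Matrix
open scoped Kronecker ComplexOrder

noncomputable section

/-- The Schur-product (Hadamard-product) superoperator `X ↦ X ∘ C`. -/
def schurMap {d : ℕ} (C : Matrix (Fin d) (Fin d) ℂ) :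
    Matrix (Fin d) (Fin d) ℂ →ₗ[ℂ] Matrix (Fin d) (Fin d) ℂ where
  toFun X := X.hadamard C
  map_add' X Y := by ext i j; simp [Matrix.hadamard]; ring
  map_smul' c X := by ext i j; simp [Matrix.hadamard]; ring

/-- The extension `E ⊗ I_n` of a superoperator, applied to a bipartite matrix. -/
def tensExt {d : ℕ} (E : Matrix (Fin d) (Fin d) ℂ →ₗ[ℂ] Matrix (Fin d) (Fin d) ℂ) (n : ℕ)
    (ρ : Matrix (Fin d × Fin n) (Fin d × Fin n) ℂ) :
    Matrix (Fin d × Fin n) (Fin d × Fin n) ℂ :=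
  Matrix.of fun p q => ∑ i, ∑ j, (E (Matrix.single i j 1)) p.1 q.1 * ρ (i, p.2) (j, q.2)

/-- Complete positivity: every extension `E ⊗ I_n` preserves positive semidefiniteness. -/
def IsCP {d : ℕ} (E : Matrix (Fin d) (Fin d) ℂ →ₗ[ℂ] Matrix (Fin d) (Fin d) ℂ) : Prop :=
  ∀ (n : ℕ) (ρ : Matrix (Fin d × Fin n) (Fin d × Fin n) ℂ),
    ρ.PosSemidef → (tensExt E n ρ).PosSemidef

/-- Trace preservation. -/
def IsTP {d : ℕ} (E : Matrix (Fin d) (Fin d) ℂ →ₗ[ℂ] Matrix (Fin d) (Fin d) ℂ) : Prop :=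
  ∀ X, (E X).trace = X.trace

/-- Quantum channel: completely positive and trace-preserving. -/
def IsCPTP {d : ℕ} (E : Matrix (Fin d) (Fin d) ℂ →ₗ[ℂ] Matrix (Fin d) (Fin d) ℂ) : Prop :=
  IsCP E ∧ IsTP E

/-- The Jamiołkowski matrix `J(E) = (E ⊗ I)(|Ψ⟩⟨Ψ|)`, with entries
`J(E)_{(i,k),(j,l)} = E(|k⟩⟨l|)_{i j} / d`. -/
def jam {d : ℕ} (E : Matrix (Fin d) (Fin d) ℂ →ₗ[ℂ] Matrix (Fin d) (Fin d) ℂ) :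
    Matrix (Fin d × Fin d) (Fin d × Fin d) ℂ :=
  Matrix.of fun p q => (E (Matrix.single p.2 q.2 1)) p.1 q.1 / d

/-- Controlled unitary `U = Σ_i |i⟩⟨i| ⊗ U_i`. -/
def ctrl {d n : ℕ} (Us : Fin d → Matrix (Fin n) (Fin n) ℂ) :
    Matrix (Fin d × Fin n) (Fin d × Fin n) ℂ :=
  Matrix.of fun p q => (if p.1 = q.1 then (1 : ℂ) else 0) * (Us p.1) p.2 q.2


/-- Partial transpose on the second tensor factor (blockwise transpose). -/
def ptrans {a b : Type*} (M : Matrix (a × b) (a × b) ℂ) : Matrix (a × b) (a × b) ℂ :=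
  Matrix.of fun p q => M (p.1, q.2) (q.1, p.2)

/-- Separability of a bipartite matrix: a finite sum of Kronecker products of
positive semidefinite matrices. -/
def Separable {a b : Type*} [Fintype a] [Fintype b] [DecidableEq a] [DecidableEq b]
    (M : Matrix (a × b) (a × b) ℂ) : Prop :=
  ∃ (k : ℕ) (A : Fin k → Matrix a a ℂ) (B : Fin k → Matrix b b ℂ),
    (∀ t, (A t).PosSemidef) ∧ (∀ t, (B t).PosSemidef) ∧ M = ∑ t, A t ⊗ₖ B t

/-- The 9×9 matrix `C` with 3×3 blocks `[[1, A, B], [Aᴴ, 1, 0], [Bᴴ, 0, 1]]`, where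
`A = |3⟩⟨1|` and `B = |1⟩⟨1|`. -/
def C13 : Matrix (Fin 3 × Fin 3) (Fin 3 × Fin 3) ℂ :=
  Matrix.of fun p q =>
    (![![(1 : Matrix (Fin 3) (Fin 3) ℂ), Matrix.single 2 0 1, Matrix.single 0 0 1],
       ![(Matrix.single 2 0 1)ᴴ, 1, 0],
       ![(Matrix.single 0 0 1)ᴴ, 0, 1]] p.1 q.1) p.2 q.2


/-- auxiliary: rank-one matrices `v (star v)ᵀ` are PSD. -/
lemma psd_vmv' {n : Type*} [Fintype n] (v : n → ℂ) : (vecMulVec v (star v)).PosSemidef := by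
  refine PosSemidef.of_dotProduct_mulVec_nonneg ?_ ?_
  · ext i j
    simp [vecMulVec_apply, conjTranspose_apply, mul_comm]
  · intro x
    have h : vecMulVec v (star v) *ᵥ x = (star v ⬝ᵥ x) • v := by
      ext i
      simp only [mulVec, dotProduct, vecMulVec_apply, Pi.smul_apply, smul_eq_mul, Pi.star_apply]
      rw [Finset.sum_mul]
      exact Finset.sum_congr rfl fun j _ => by ring
    rw [h, dotProduct_smul]
    have h2 : star x ⬝ᵥ v = star (star v ⬝ᵥ x) := by
      simp [dotProduct, Finset.sum_comm, mul_comm]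
    rw [h2, smul_eq_mul]
    exact mul_star_self_nonneg _

/-- auxiliary: Kronecker products of PSD matrices are PSD. -/
lemma kron_psd' {a b : Type*} [Fintype a] [Fintype b] [DecidableEq a] [DecidableEq b]
    {A : Matrix a a ℂ} {B : Matrix b b ℂ} (hA : A.PosSemidef) (hB : B.PosSemidef) :
    (A ⊗ₖ B).PosSemidef := by
  exact hA.kronecker hB

lemma psd_zero' {n : Type*} [Fintype n] : (0 : Matrix n n ℂ).PosSemidef :=
  ⟨by simp [Matrix.IsHermitian], fun x => by simp⟩

def w1' : Fin 3 × Fin 3 → ℂ := fun p => if p = (0,2) ∨ p = (1,0) then 1 else 0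
def w2' : Fin 3 × Fin 3 → ℂ := fun p => if p = (0,0) ∨ p = (2,0) then 1 else 0
def dd' : Fin 3 × Fin 3 → ℂ := fun p =>
  if p = (0,0) ∨ p = (0,2) ∨ p = (1,0) ∨ p = (2,0) then 0 else 1

set_option maxHeartbeats 2000000 in
lemma C13_decomp : C13 = vecMulVec w1' (star w1') + vecMulVec w2' (star w2') + diagonal dd' := by
  ext ⟨i, j⟩ ⟨k, l⟩
  fin_cases i <;> fin_cases j <;> fin_cases k <;> fin_cases l <;>
    simp [C13, w1', w2', dd', vecMulVec_apply, diagonal, Matrix.single,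
      Matrix.one_apply, Prod.ext_iff, Matrix.cons_val_two]

lemma C13_psd : C13.PosSemidef := by
  rw [C13_decomp]
  refine ((psd_vmv' w1').add (psd_vmv' w2')).add (posSemidef_diagonal_iff.mpr fun i => ?_)
  dsimp only [dd']
  split
  · exact le_rfl
  · exact zero_le_one

def vv' : Fin 3 × Fin 3 → ℂ := fun p =>
  if p = (0,0) then (-(Real.sqrt 2) : ℝ) else if p = (1,2) ∨ p = (2,0) then 1 else 0

set_option maxHeartbeats 2000000 in
lemma hv' : ptrans C13 *ᵥ vv' = ((1:ℂ) - Real.sqrt 2) • vv' := by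
  have h2 : (Real.sqrt 2 : ℂ) * Real.sqrt 2 = 2 := by
    rw [← Complex.ofReal_mul, Real.mul_self_sqrt (by norm_num)]; norm_num
  ext ⟨i, j⟩
  fin_cases i <;> fin_cases j <;>
    simp [ptrans, C13, vv', mulVec, dotProduct, Fintype.sum_prod_type, Fin.sum_univ_succ,
      Matrix.single, Matrix.one_apply, Prod.ext_iff, Matrix.cons_val_two,
      Finset.filter_singleton] <;>
    first
      | linear_combination h2
      | linear_combination -h2
      | decide
      | ring

set_option maxHeartbeats 1000000 in
lemma hdot' : star vv' ⬝ᵥ vv' = (4 : ℂ) := by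
  have h2 : (Real.sqrt 2 : ℂ) * Real.sqrt 2 = 2 := by
    rw [← Complex.ofReal_mul, Real.mul_self_sqrt (by norm_num)]; norm_num
  simp [vv', dotProduct, Fintype.sum_prod_type, Fin.sum_univ_succ, Complex.star_def,
    ← Complex.ofReal_neg, Complex.conj_ofReal]
  push_cast
  linear_combination h2

lemma quad_neg' (c : ℝ) (hc : 0 < c) :
    ¬ (0 : ℂ) ≤ (c : ℂ) * (((1:ℂ) - Real.sqrt 2) * 4) := by
  have h : (c : ℂ) * (((1:ℂ) - Real.sqrt 2) * 4) = ((c * ((1 - Real.sqrt 2) * 4) : ℝ) : ℂ) := by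
    push_cast; ring
  rw [h, Complex.zero_le_real]
  intro hle
  have hs : 1 < Real.sqrt 2 := by
    nlinarith [Real.sq_sqrt (show (0:ℝ) ≤ 2 by norm_num), Real.sqrt_nonneg 2]
  nlinarith

lemma ptrans_C13_npsd : ¬ (ptrans C13).PosSemidef := by
  intro h
  have h1 := h.dotProduct_mulVec_nonneg vv'
  rw [hv', dotProduct_smul, hdot', smul_eq_mul] at h1
  have := quad_neg' 1 one_pos
  rw [Complex.ofReal_one, one_mul] at this
  exact this (by linear_combination h1)

/-- `C13` is positive semidefinite with unit diagonal, but its partial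
transpose has the negative eigenvalue `1 − √2`; hence `C13/9` is an entangled state
violating the PPT criterion. -/
theorem stmt13 :
    C13.PosSemidef ∧ (∀ p, C13 p p = 1) ∧
    ((1 - Real.sqrt 2 : ℂ) ∈ spectrum ℂ (ptrans C13)) ∧
    ¬ (ptrans C13).PosSemidef ∧
    ¬ Separable ((9 : ℂ)⁻¹ • C13) := by
  refine ⟨C13_psd, ?_, ?_, ptrans_C13_npsd, ?_⟩
  · -- unit diagonal
    rintro ⟨i, j⟩
    fin_cases i <;> fin_cases j <;>
      simp [C13, Matrix.single, Matrix.one_apply]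
  · -- spectrum
    rw [spectrum.mem_iff]
    rintro ⟨u, hu⟩
    have h0 : (algebraMap ℂ (Matrix (Fin 3 × Fin 3) (Fin 3 × Fin 3) ℂ)
        ((1 : ℂ) - Real.sqrt 2) - ptrans C13) *ᵥ vv' = 0 := by
      rw [sub_mulVec, Algebra.algebraMap_eq_smul_one, smul_mulVec, one_mulVec, hv',
        sub_self]
    have hinv : (↑u⁻¹ : Matrix (Fin 3 × Fin 3) (Fin 3 × Fin 3) ℂ) *
        (algebraMap ℂ (Matrix (Fin 3 × Fin 3) (Fin 3 × Fin 3) ℂ)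
          ((1 : ℂ) - Real.sqrt 2) - ptrans C13) = 1 := by
      rw [← hu]; exact u.inv_mul
    have hz : vv' = 0 := by
      calc vv' = (1 : Matrix (Fin 3 × Fin 3) (Fin 3 × Fin 3) ℂ) *ᵥ vv' := (one_mulVec vv').symm
        _ = 0 := by rw [← hinv, ← mulVec_mulVec, h0, mulVec_zero]
    have : vv' ((1 : Fin 3), (2 : Fin 3)) = 0 := by rw [hz]; rfl
    simp [vv'] at this
  · -- not separable
    rintro ⟨k, A, B, hA, hB, hsum⟩
    have hPT : ptrans ((9 : ℂ)⁻¹ • C13) = ∑ t, A t ⊗ₖ (B t)ᵀ := by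
      rw [hsum]
      ext ⟨i, j⟩ ⟨a, b⟩
      simp [ptrans, Matrix.sum_apply, kroneckerMap_apply, transpose_apply]
    have hpsd : (ptrans ((9 : ℂ)⁻¹ • C13)).PosSemidef := by
      rw [hPT]
      refine Finset.sum_induction _ Matrix.PosSemidef (fun a b ha hb => ha.add hb)
        psd_zero' fun t _ => kron_psd' (hA t) ((hB t).transpose)
    have hsc : ptrans ((9 : ℂ)⁻¹ • C13) = (9 : ℂ)⁻¹ • ptrans C13 := by
      ext ⟨i, j⟩ ⟨a, b⟩
      simp [ptrans]
    have h1 := hpsd.dotProduct_mulVec_nonneg vv'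
    rw [hsc, smul_mulVec, dotProduct_smul, hv', dotProduct_smul, hdot',
      smul_eq_mul, smul_eq_mul] at h1
    exact quad_neg' (9 : ℝ)⁻¹ (by norm_num)
      (by push_cast; linear_combination h1)


end
end

section
/- Let E be a channel with generalized robustness of coherence R(E) (minimal r ≥ 0 such that (E + rF)/(1+r) is a classical channel for some channel F). Then for any M dephasing superchannels {Ξ_{C_i}}, any bipartite input state ρ, and any POVM {E_i}, one has Σ_{i=1}^M Tr[E_i (Ξ_{C_i}[E] ⊗ I)(ρ)] ≤ 1 + R(E); hence if the M superchannels are distinguishable via E with average success probability 1−ε, then M ≤ (1+R(E))/(1−ε). -/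
open Matrix
open scoped Kronecker ComplexOrder

noncomputable section

/-- The classical channel `E_T(ρ) = Σ_{ij} T_ij ⟨j|ρ|j⟩ |i⟩⟨i|` of a matrix `T`. -/
def classicalChannel {d : ℕ} (T : Matrix (Fin d) (Fin d) ℝ) :
    Matrix (Fin d) (Fin d) ℂ →ₗ[ℂ] Matrix (Fin d) (Fin d) ℂ where
  toFun ρ := Matrix.of fun i i' => if i = i' then ∑ j, (T i j : ℂ) * ρ j j else 0
  map_add' X Y := by
    ext i i'
    by_cases h : i = i'
    · simp [h, mul_add, Finset.sum_add_distrib]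
    · simp [h]
  map_smul' c X := by
    ext i i'
    by_cases h : i = i'
    · simp [h, Finset.mul_sum]
      exact Finset.sum_congr rfl fun j _ => by ring
    · simp [h]

/-- A classical quantum channel: one of the form `E_T` with `T` stochastic. -/
def IsClassical {d : ℕ} (E : Matrix (Fin d) (Fin d) ℂ →ₗ[ℂ] Matrix (Fin d) (Fin d) ℂ) :
    Prop :=
  ∃ T : Matrix (Fin d) (Fin d) ℝ, (∀ i j, 0 ≤ T i j) ∧ (∀ j, ∑ i, T i j = 1) ∧
    E = classicalChannel T

section Helpers

open Complex

/-- trace of `Mᴴ * M` is nonneg (ComplexOrder). -/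
lemma trace_conjT_mul_self_nonneg {m k : Type*} [Fintype m] [Fintype k]
    (Q : Matrix m k ℂ) : 0 ≤ (Qᴴ * Q).trace := by
  rw [Matrix.trace]
  refine Finset.sum_nonneg fun j _ => ?_
  rw [Matrix.diag_apply, Matrix.mul_apply]
  exact Finset.sum_nonneg fun i _ => by
    simpa [Matrix.conjTranspose_apply] using star_mul_self_nonneg (Q i j)

open scoped MatrixOrder in
lemma psd_eq_conjT_mul_self {m : Type*} [Fintype m] [DecidableEq m]
    {A : Matrix m m ℂ} (hA : A.PosSemidef) : ∃ B : Matrix m m ℂ, A = Bᴴ * B := by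
  obtain ⟨B, hB⟩ := CStarAlgebra.nonneg_iff_eq_star_mul_self.mp hA.nonneg
  exact ⟨B, hB⟩

lemma trace_mul_psd_nonneg {m : Type*} [Fintype m] [DecidableEq m]
    {A B : Matrix m m ℂ} (hA : A.PosSemidef) (hB : B.PosSemidef) :
    0 ≤ (A * B).trace := by
  obtain ⟨P, rfl⟩ := psd_eq_conjT_mul_self hA
  obtain ⟨Q, rfl⟩ := psd_eq_conjT_mul_self hB
  have : (Pᴴ * P * (Qᴴ * Q)).trace = ((P * Qᴴ)ᴴ * (P * Qᴴ)).trace := by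
    rw [Matrix.conjTranspose_mul, Matrix.conjTranspose_conjTranspose]
    rw [show Pᴴ * P * (Qᴴ * Q) = (Pᴴ * (P * Qᴴ)) * Q by noncomm_ring]
    rw [Matrix.trace_mul_cycle]
  rw [this]
  exact trace_conjT_mul_self_nonneg _

lemma psd_smul_real {m : Type*} [Fintype m] {M : Matrix m m ℂ}
    (hM : M.PosSemidef) {c : ℝ} (hc : 0 ≤ c) : ((c : ℂ) • M).PosSemidef := by
  exact hM.smul (by exact_mod_cast Complex.zero_le_real.mpr hc)

lemma psd_hadamard {m : Type*} [Fintype m] [DecidableEq m] {A B : Matrix m m ℂ}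
    (hA : A.PosSemidef) (hB : B.PosSemidef) : (A.hadamard B).PosSemidef := by
  obtain ⟨P, rfl⟩ := psd_eq_conjT_mul_self hA
  obtain ⟨Q, rfl⟩ := psd_eq_conjT_mul_self hB
  let R : Matrix (m × m) m ℂ := Matrix.of fun s p => P s.1 p * Q s.2 p
  have : (Pᴴ * P).hadamard (Qᴴ * Q) = Rᴴ * R := by
    ext p q
    simp only [Matrix.hadamard, Matrix.of_apply, Matrix.mul_apply,
      Matrix.conjTranspose_apply, R, Fintype.sum_prod_type, Finset.sum_mul_sum]
    refine Finset.sum_congr rfl fun s _ => Finset.sum_congr rfl fun t _ => ?_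
    simp [mul_comm, mul_left_comm, mul_assoc]
  rw [this]
  exact Matrix.posSemidef_conjTranspose_mul_self R

/-- Choi-type positivity. -/
lemma choi_act_psd {d n : ℕ} {J : Matrix (Fin d × Fin d) (Fin d × Fin d) ℂ}
    (hJ : J.PosSemidef) {ρ : Matrix (Fin d × Fin n) (Fin d × Fin n) ℂ}
    (hρ : ρ.PosSemidef) :
    (Matrix.of fun p q : Fin d × Fin n =>
      ∑ k, ∑ l, J (p.1, k) (q.1, l) * ρ (k, p.2) (l, q.2)).PosSemidef := by
  obtain ⟨A, hA⟩ := psd_eq_conjT_mul_self hJ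
  obtain ⟨B, hB⟩ := psd_eq_conjT_mul_self hρ
  let Y : Matrix ((Fin d × Fin d) × (Fin d × Fin n)) (Fin d × Fin n) ℂ :=
    Matrix.of fun s q => ∑ l, A s.1 (q.1, l) * B s.2 (l, q.2)
  have key : (Matrix.of fun p q : Fin d × Fin n =>
      ∑ k, ∑ l, J (p.1, k) (q.1, l) * ρ (k, p.2) (l, q.2)) = Yᴴ * Y := by
    ext p q
    have e1 : (Yᴴ * Y) p q = ∑ s : (Fin d × Fin d) × (Fin d × Fin n), ∑ k, ∑ l,
        (star (A s.1 (p.1, k)) * star (B s.2 (k, p.2))) * (A s.1 (q.1, l) * B s.2 (l, q.2)) := by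
      rw [Matrix.mul_apply]
      refine Finset.sum_congr rfl fun s _ => ?_
      simp only [Matrix.conjTranspose_apply, Y, Matrix.of_apply, star_sum, star_mul',
        Finset.sum_mul_sum]
    rw [Matrix.of_apply, e1]
    conv_rhs => rw [Finset.sum_comm]
    refine Finset.sum_congr rfl fun k _ => ?_
    conv_rhs => rw [Finset.sum_comm]
    refine Finset.sum_congr rfl fun l _ => ?_
    rw [hA, hB, Matrix.mul_apply, Matrix.mul_apply, Finset.sum_mul_sum]
    conv_rhs => rw [Fintype.sum_prod_type]
    refine Finset.sum_congr rfl fun s1 _ => Finset.sum_congr rfl fun s2 _ => ?_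
    simp only [Matrix.conjTranspose_apply]
    ring
  rw [key]
  exact Matrix.posSemidef_conjTranspose_mul_self Y

end Helpers

lemma jam_psd {d : ℕ} {E : Matrix (Fin d) (Fin d) ℂ →ₗ[ℂ] Matrix (Fin d) (Fin d) ℂ}
    (hE : IsCP E) : (jam E).PosSemidef := by
  set Ψ : Matrix (Fin d × Fin d) (Fin d × Fin d) ℂ :=
    Matrix.of (fun p q => (if p.1 = p.2 then 1 else 0) * (if q.1 = q.2 then 1 else 0) / d) with hΨ
  have hΨpsd : Ψ.PosSemidef := by
    let W : Matrix (Fin 1) (Fin d × Fin d) ℂ :=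
      Matrix.of fun _ p => if p.1 = p.2 then (Real.sqrt ((d : ℝ)⁻¹) : ℂ) else 0
    have hW : Ψ = Wᴴ * W := by
      ext p q
      have he : (Wᴴ * W) p q = star (W 0 p) * W 0 q := by
        rw [Matrix.mul_apply, Fin.sum_univ_one]
        rfl
      rw [he]
      simp only [W, Matrix.of_apply, hΨ]
      by_cases h1 : p.1 = p.2 <;> by_cases h2 : q.1 = q.2 <;>
        simp only [h1, h2, if_true, if_false, star_zero, mul_zero, zero_mul, zero_div,
          one_mul, mul_one, ite_true, ite_false]
      rw [Complex.star_def, Complex.conj_ofReal, ← Complex.ofReal_mul,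
        Real.mul_self_sqrt (by positivity)]
      push_cast
      ring
    rw [hW]; exact Matrix.posSemidef_conjTranspose_mul_self W
  have hjam : jam E = tensExt E d Ψ := by
    ext p q
    simp only [tensExt, jam, Matrix.of_apply, hΨ]
    rw [Finset.sum_eq_single p.2]
    · rw [Finset.sum_eq_single q.2]
      · simp [mul_one_div, div_eq_mul_inv]
      · intro j _ hj; simp [hj]
      · intro h; exact absurd (Finset.mem_univ _) h
    · intro i _ hi; simp [hi]
    · intro h; exact absurd (Finset.mem_univ _) h
  rw [hjam]; exact hE d Ψ hΨpsd

lemma cc_std_entry {d : ℕ} (T : Matrix (Fin d) (Fin d) ℝ) (k l i i' : Fin d) :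
    (classicalChannel T (Matrix.single k l 1)) i i'
      = if i = i' ∧ k = l then (T i k : ℂ) else 0 := by
  simp only [classicalChannel, LinearMap.coe_mk, AddHom.coe_mk, Matrix.of_apply]
  by_cases h : i = i'
  · subst h
    simp only [if_true, true_and, Matrix.single, Matrix.of_apply]
    rw [Finset.sum_eq_single k]
    · by_cases hkl : k = l
      · simp [hkl]
      · have hne : ¬(k = k ∧ l = k) := fun hc => hkl hc.2.symm
        simp [hkl, hne]
        exact fun h => absurd h.symm hkl
    · intro j _ hj; simp [Ne.symm hj]
    · intro h; exact absurd (Finset.mem_univ _) h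
  · simp [h]

/-- if `r ≥ 0` witnesses the (generalized) robustness of coherence of
a channel `E`, i.e. `(E + rF)/(1+r)` is classical for some channel `F`, then for any
`M` dephasing superchannels (given by correlation matrices `C i` with constant
diagonal blocks, producing channels `G i` with `J(G i) = J(E) ∘ C i`), any bipartite
input state and any POVM, the total success weight is at most `1 + r`; hence if the
average success probability is `1 − ε`, then `M ≤ (1 + r)/(1 − ε)`. -/
theorem stmt18 (d n M : ℕ)
    (E : Matrix (Fin d) (Fin d) ℂ →ₗ[ℂ] Matrix (Fin d) (Fin d) ℂ) (hE : IsCPTP E)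
    (r : ℝ) (hr : 0 ≤ r)
    (F : Matrix (Fin d) (Fin d) ℂ →ₗ[ℂ] Matrix (Fin d) (Fin d) ℂ) (hF : IsCPTP F)
    (hmix : IsClassical ((((1 : ℂ) + r)⁻¹) • (E + (r : ℂ) • F)))
    (C : Fin M → Matrix (Fin d × Fin d) (Fin d × Fin d) ℂ)
    (hCpsd : ∀ i, (C i).PosSemidef) (hCdiag : ∀ i p, (C i) p p = 1)
    (hCblocks : ∀ i a a' k l, (C i) (a, k) (a, l) = (C i) (a', k) (a', l))
    (G : Fin M → (Matrix (Fin d) (Fin d) ℂ →ₗ[ℂ] Matrix (Fin d) (Fin d) ℂ))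
    (hGcptp : ∀ i, IsCPTP (G i)) (hGjam : ∀ i, jam (G i) = (jam E).hadamard (C i))
    (ρ : Matrix (Fin d × Fin n) (Fin d × Fin n) ℂ)
    (hρ : ρ.PosSemidef) (hρtr : ρ.trace = 1)
    (Es : Fin M → Matrix (Fin d × Fin n) (Fin d × Fin n) ℂ)
    (hEs : ∀ i, (Es i).PosSemidef) (hEsum : ∑ i, Es i = 1) :
    (∑ i, (Es i * tensExt (G i) n ρ).trace).re ≤ 1 + r ∧
    ∀ ε : ℝ, ε < 1 →
      (M : ℝ)⁻¹ * (∑ i, (Es i * tensExt (G i) n ρ).trace).re = 1 - ε →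
      (M : ℝ) ≤ (1 + r) / (1 - ε) := by
  classical
  have hd0 : d ≠ 0 := by
    rintro rfl
    rw [Matrix.trace] at hρtr
    simp at hρtr
  have hd : (d : ℂ) ≠ 0 := Nat.cast_ne_zero.mpr hd0
  obtain ⟨T, hT1, hT2, hTeq⟩ := hmix
  have h1r : ((1 : ℂ) + (r : ℂ)) ≠ 0 := by
    rw [show ((1 : ℂ) + (r : ℂ)) = (((1 + r : ℝ)) : ℂ) by push_cast; ring]
    exact_mod_cast (by positivity : (1 + r : ℝ) ≠ 0)
  have hEeq : E + (r : ℂ) • F = ((1 : ℂ) + r) • classicalChannel T := by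
    rw [← hTeq, smul_smul, mul_inv_cancel₀ h1r, one_smul]
  have hEval : ∀ (X : Matrix (Fin d) (Fin d) ℂ) (i j : Fin d),
      E X i j = ((1 : ℂ) + r) * classicalChannel T X i j - r * F X i j := by
    intro X i j
    have h := LinearMap.congr_fun hEeq X
    simp only [LinearMap.add_apply, LinearMap.smul_apply] at h
    have h2 := congrFun (congrFun h i) j
    simp only [Matrix.add_apply, Matrix.smul_apply, smul_eq_mul] at h2
    linear_combination h2
  set Xn : Matrix (Fin d × Fin n) (Fin d × Fin n) ℂ :=
    tensExt (classicalChannel T) n ρ with hXn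
  set Xf : Fin M → Matrix (Fin d × Fin n) (Fin d × Fin n) ℂ := fun i =>
    Matrix.of fun p q => ∑ k, ∑ l,
      ((d : ℂ) • ((jam F).hadamard (C i))) (p.1, k) (q.1, l) * ρ (k, p.2) (l, q.2) with hXf
  have hXfpsd : ∀ i, (Xf i).PosSemidef := by
    intro i
    have h1 : ((jam F).hadamard (C i)).PosSemidef := psd_hadamard (jam_psd hF.1) (hCpsd i)
    have h2 := psd_smul_real h1 (c := (d : ℝ)) d.cast_nonneg
    rw [show (((d : ℝ) : ℂ)) = ((d : ℕ) : ℂ) by push_cast; ring] at h2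
    exact choi_act_psd h2 hρ
  have hdecomp : ∀ i, tensExt (G i) n ρ = ((1 : ℂ) + r) • Xn - (r : ℂ) • Xf i := by
    intro i
    ext p q
    simp only [tensExt, Matrix.sub_apply, Matrix.smul_apply, hXn, hXf, Matrix.of_apply,
      smul_eq_mul]
    rw [Finset.mul_sum, Finset.mul_sum, ← Finset.sum_sub_distrib]
    refine Finset.sum_congr rfl fun k _ => ?_
    rw [Finset.mul_sum, Finset.mul_sum, ← Finset.sum_sub_distrib]
    refine Finset.sum_congr rfl fun l _ => ?_
    have hGv : (G i) (Matrix.single k l 1) p.1 q.1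
        = (d : ℂ) * jam (G i) (p.1, k) (q.1, l) := by
      simp only [jam, Matrix.of_apply]
      field_simp
    have hjE : jam E (p.1, k) (q.1, l)
        = (((1 : ℂ) + r) * classicalChannel T (Matrix.single k l 1) p.1 q.1
            - r * F (Matrix.single k l 1) p.1 q.1) / d := by
      simp only [jam, Matrix.of_apply]
      rw [hEval]
    have hjF : jam F (p.1, k) (q.1, l) = F (Matrix.single k l 1) p.1 q.1 / d := by
      simp [jam]
    have hCabs : classicalChannel T (Matrix.single k l 1) p.1 q.1 * C i (p.1, k) (q.1, l)
        = classicalChannel T (Matrix.single k l 1) p.1 q.1 := by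
      by_cases hpq : p.1 = q.1 ∧ k = l
      · have hpt : ((p.1, k) : Fin d × Fin d) = (q.1, l) := by rw [hpq.1, hpq.2]
        rw [hpt, hCdiag i, mul_one]
      · rw [cc_std_entry, if_neg hpq, zero_mul]
    have key : ∀ cc Fv Cv : ℂ, cc * Cv = cc →
        (d : ℂ) * ((((1 : ℂ) + r) * cc - r * Fv) / d * Cv)
          = ((1 : ℂ) + r) * cc - r * ((d : ℂ) * (Fv / d * Cv)) := by
      intro cc Fv Cv h
      field_simp
      linear_combination ((1 : ℂ) + (r : ℂ)) * h
    have hval : (G i) (Matrix.single k l 1) p.1 q.1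
        = ((1 : ℂ) + r) * classicalChannel T (Matrix.single k l 1) p.1 q.1
          - r * (((d : ℂ) • ((jam F).hadamard (C i))) (p.1, k) (q.1, l)) := by
      rw [Matrix.smul_apply, smul_eq_mul, Matrix.hadamard_apply, hGv, hGjam i,
        Matrix.hadamard_apply, hjE, hjF]
      exact key _ _ _ hCabs
    rw [hval]
    simp only [Matrix.smul_apply, smul_eq_mul]
    ring
  have hXntr : Xn.trace = 1 := by
    have hdiag : ∀ p : Fin d × Fin n,
        Xn p p = ∑ k, (T p.1 k : ℂ) * ρ (k, p.2) (k, p.2) := by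
      intro p
      simp only [hXn, tensExt, Matrix.of_apply]
      refine Finset.sum_congr rfl fun k _ => ?_
      rw [Finset.sum_eq_single k]
      · rw [cc_std_entry, if_pos ⟨rfl, rfl⟩]
      · intro l _ hl
        rw [cc_std_entry, if_neg (by simp [Ne.symm hl]), zero_mul]
      · intro h; exact absurd (Finset.mem_univ _) h
    rw [Matrix.trace]
    calc ∑ p : Fin d × Fin n, Xn.diag p
        = ∑ p : Fin d × Fin n, ∑ k, (T p.1 k : ℂ) * ρ (k, p.2) (k, p.2) := by
          exact Finset.sum_congr rfl fun p _ => hdiag p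
      _ = ∑ p1 : Fin d, ∑ p2 : Fin n, ∑ k, (T p1 k : ℂ) * ρ (k, p2) (k, p2) := by
          rw [Fintype.sum_prod_type]
      _ = ∑ p2 : Fin n, ∑ k : Fin d, (∑ p1 : Fin d, (T p1 k : ℂ)) * ρ (k, p2) (k, p2) := by
          rw [Finset.sum_comm]
          refine Finset.sum_congr rfl fun p2 _ => ?_
          rw [Finset.sum_comm]
          refine Finset.sum_congr rfl fun k _ => ?_
          rw [Finset.sum_mul]
      _ = ∑ p2 : Fin n, ∑ k : Fin d, ρ (k, p2) (k, p2) := by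
          refine Finset.sum_congr rfl fun p2 _ => Finset.sum_congr rfl fun k _ => ?_
          have : (∑ p1 : Fin d, (T p1 k : ℂ)) = ((∑ p1, T p1 k : ℝ) : ℂ) := by push_cast; rfl
          rw [this, hT2 k, Complex.ofReal_one, one_mul]
      _ = ρ.trace := by
          rw [Matrix.trace, Fintype.sum_prod_type, Finset.sum_comm]
          rfl
      _ = 1 := hρtr
  have htr : ∀ i, (Es i * tensExt (G i) n ρ).trace
      = ((1 : ℂ) + r) * (Es i * Xn).trace - (r : ℂ) * (Es i * Xf i).trace := by
    intro i
    rw [hdecomp i, Matrix.mul_sub, Matrix.mul_smul, Matrix.mul_smul, Matrix.trace_sub,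
      Matrix.trace_smul, Matrix.trace_smul, smul_eq_mul, smul_eq_mul]
  have hsum1 : ∑ i, (Es i * Xn).trace = 1 := by
    rw [← Matrix.trace_sum, ← Matrix.sum_mul, hEsum, Matrix.one_mul, hXntr]
  set W := ∑ i, (Es i * Xf i).trace with hWdef
  have hW0 : (0 : ℂ) ≤ W :=
    Finset.sum_nonneg fun i _ => trace_mul_psd_nonneg (hEs i) (hXfpsd i)
  have hS : ∑ i, (Es i * tensExt (G i) n ρ).trace = ((1 : ℂ) + r) - (r : ℂ) * W := by
    calc ∑ i, (Es i * tensExt (G i) n ρ).trace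
        = ∑ i, (((1 : ℂ) + r) * (Es i * Xn).trace - (r : ℂ) * (Es i * Xf i).trace) :=
          Finset.sum_congr rfl fun i _ => htr i
      _ = ((1 : ℂ) + r) * (∑ i, (Es i * Xn).trace) - (r : ℂ) * W := by
          rw [Finset.sum_sub_distrib, ← Finset.mul_sum, ← Finset.mul_sum, hWdef]
      _ = ((1 : ℂ) + r) - (r : ℂ) * W := by rw [hsum1, mul_one]
  have hWre : 0 ≤ W.re ∧ W.im = 0 := by
    rw [Complex.le_def] at hW0
    exact ⟨by simpa using hW0.1, by simpa using hW0.2.symm⟩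
  have hre : (∑ i, (Es i * tensExt (G i) n ρ).trace).re = 1 + r - r * W.re := by
    rw [hS]
    simp [Complex.sub_re, Complex.add_re, Complex.mul_re, Complex.ofReal_re,
      Complex.ofReal_im, hWre.2]
  have hbound : (∑ i, (Es i * tensExt (G i) n ρ).trace).re ≤ 1 + r := by
    rw [hre]
    have := mul_nonneg hr hWre.1
    linarith
  refine ⟨hbound, ?_⟩
  intro ε hε heq
  have hM : M ≠ 0 := by
    rintro rfl
    simp at heq
    linarith
  have hMpos : (0 : ℝ) < M := by exact_mod_cast Nat.pos_of_ne_zero hM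
  have hse : (M : ℝ) * (1 - ε) = (∑ i, (Es i * tensExt (G i) n ρ).trace).re := by
    rw [← heq]
    field_simp
  rw [le_div_iff₀ (by linarith : (0 : ℝ) < 1 - ε)]
  calc (M : ℝ) * (1 - ε) = _ := hse
    _ ≤ 1 + r := hbound

end
end
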